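/- For every ε > 0 there exists N such that for all n ≥ N there is a left-cancellative pair (𝓐, 𝓑) over a ground set of size n with |𝓐| · |𝓑| ≥ 3^((1−ε)·n). -/

import Mathlib

open Finset

section helpers
variable {n m : ℕ}

/-- dot product over `ZMod 2`. -/
def dotp (h v : Fin n → ZMod 2) : ZMod 2 := ∑ j, h j * v j

lemma dotp_add (h v w : Fin n → ZMod 2) : dotp h (v + w) = dotp h v + dotp h w := by
  simp [dotp, mul_add, Finset.sum_add_distrib]

/-- the support of a vector, as a `Finset ℕ`. -/
def img (v : Fin n → ZMod 2) : Finset ℕ :=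
  (Finset.univ.filter fun j => v j = 1).map Fin.valEmbedding

lemma mem_img {v : Fin n → ZMod 2} {x : ℕ} :
    x ∈ img v ↔ ∃ j : Fin n, v j = 1 ∧ (j : ℕ) = x := by
  simp [img, Fin.valEmbedding, and_comm]

lemma img_injective : Function.Injective (img (n := n)) := by
  intro v w h
  funext j
  have hv : ∀ u : Fin n → ZMod 2, (j : ℕ) ∈ img u ↔ u j = 1 := by
    intro u
    rw [mem_img]
    constructor
    · rintro ⟨j', h1, h2⟩
      have : j' = j := Fin.val_injective h2
      rwa [this] at h1
    · intro h1; exact ⟨j, h1, rfl⟩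
  have := (hv v).symm.trans (h ▸ hv w)
  have h2 : ∀ x : ZMod 2, x = 0 ∨ x = 1 := by decide
  rcases h2 (v j) with h3 | h3 <;> rcases h2 (w j) with h4 | h4 <;> simp_all

lemma img_subset_range (v : Fin n → ZMod 2) : img v ⊆ Finset.range n := by
  intro x hx
  rw [mem_img] at hx
  obtain ⟨j, _, hj⟩ := hx
  simp [← hj, j.isLt]

end helpers

section kern
variable {n m : ℕ}

/-- kernel of the matrix with rows `M i`, as a Finset. -/
def kerM (M : Fin m → Fin n → ZMod 2) : Finset (Fin n → ZMod 2) :=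
  Finset.univ.filter fun v => ∀ i, dotp (M i) v = 0

lemma kerM_card (M : Fin m → Fin n → ZMod 2) : 2 ^ n ≤ (kerM M).card * 2 ^ m := by
  classical
  set f : (Fin n → ZMod 2) → (Fin m → ZMod 2) := fun v i => dotp (M i) v with hf
  have hcardV : (Finset.univ : Finset (Fin n → ZMod 2)).card = 2 ^ n := by
    simp [Finset.card_univ]
  have hfib := Finset.card_eq_sum_card_fiberwise
    (fun v (_ : v ∈ (Finset.univ : Finset (Fin n → ZMod 2))) =>
      Finset.mem_image_of_mem f (Finset.mem_univ v))
  rw [hcardV] at hfib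
  have hbound : ∀ w ∈ Finset.univ.image f,
      (Finset.univ.filter fun v => f v = w).card ≤ (kerM M).card := by
    intro w hw
    obtain ⟨v0, _, hv0⟩ := Finset.mem_image.mp hw
    apply Finset.card_le_card_of_injOn (fun x => x + v0)
    · intro x hx
      simp only [Finset.mem_coe, Finset.mem_filter, Finset.mem_univ, true_and] at hx
      simp only [Finset.mem_coe, kerM, Finset.mem_filter, Finset.mem_univ, true_and]
      intro i
      have : f (x + v0) i = f x i + f v0 i := by simp [hf, dotp_add]
      have h2 : f x i + f v0 i = 0 := by
        rw [hx, hv0]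
        have : ∀ a : ZMod 2, a + a = 0 := by decide
        exact this _
      have h3 : f (x + v0) i = 0 := this.trans h2
      simpa [hf] using h3
    · intro a _ b _ hab
      exact add_right_cancel hab
  calc 2 ^ n = ∑ w ∈ Finset.univ.image f, (Finset.univ.filter fun v => f v = w).card := hfib
    _ ≤ ∑ _w ∈ Finset.univ.image f, (kerM M).card := Finset.sum_le_sum hbound
    _ = (Finset.univ.image f).card * (kerM M).card := by rw [Finset.sum_const, smul_eq_mul]
    _ ≤ 2 ^ m * (kerM M).card := by
        apply Nat.mul_le_mul_right
        calc (Finset.univ.image f).card ≤ (Finset.univ : Finset (Fin m → ZMod 2)).card :=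
              Finset.card_le_card (Finset.subset_univ _)
          _ = 2 ^ m := by simp [Finset.card_univ]
    _ = (kerM M).card * 2 ^ m := Nat.mul_comm _ _

lemma kerM_add {M : Fin m → Fin n → ZMod 2} {v w : Fin n → ZMod 2}
    (hv : v ∈ kerM M) (hw : w ∈ kerM M) : v + w ∈ kerM M := by
  simp only [kerM, Finset.mem_filter, Finset.mem_univ, true_and] at *
  intro i
  rw [dotp_add, hv i, hw i, add_zero]

end kern

section counts
variable {n m : ℕ}

lemma row_count {v : Fin n → ZMod 2} (hv : v ≠ 0) :
    (Finset.univ.filter fun h : Fin n → ZMod 2 => dotp h v = 0).card * 2 = 2 ^ n := by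
  classical
  -- find a coordinate where v is 1
  have : ∃ j0 : Fin n, v j0 = 1 := by
    by_contra hc
    push_neg at hc
    apply hv
    funext j
    have h2 : ∀ a : ZMod 2, a = 0 ∨ a = 1 := by decide
    rcases h2 (v j) with h | h
    · exact h
    · exact absurd h (hc j)
  obtain ⟨j0, hj0⟩ := this
  set e : Fin n → ZMod 2 := fun j => if j = j0 then 1 else 0 with he
  have hdote : ∀ h : Fin n → ZMod 2, dotp (h + e) v = dotp h v + 1 := by
    intro h
    have : dotp e v = 1 := by
      rw [dotp]
      rw [Finset.sum_eq_single j0]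
      · simp [he, hj0]
      · intro b _ hb; simp [he, hb]
      · intro hb; exact absurd (Finset.mem_univ j0) hb
    calc dotp (h + e) v = dotp h v + dotp e v := by
          simp [dotp, add_mul, Finset.sum_add_distrib]
      _ = dotp h v + 1 := by rw [this]
  have hcard : (Finset.univ.filter fun h : Fin n → ZMod 2 => dotp h v = 0).card
      = (Finset.univ.filter fun h : Fin n → ZMod 2 => ¬ dotp h v = 0).card := by
    apply Finset.card_bij' (fun h _ => h + e) (fun h _ => h + e)
    · intro h hh
      simp only [Finset.mem_filter, Finset.mem_univ, true_and] at *
      rw [hdote, hh]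
      decide
    · intro h hh
      simp only [Finset.mem_filter, Finset.mem_univ, true_and] at *
      rw [hdote]
      have h2 : ∀ a : ZMod 2, ¬ a = 0 → a = 1 := by decide
      rw [h2 _ hh]
      decide
    · intro h _
      funext j
      have : ∀ a b : ZMod 2, a + b + b = a := by decide
      exact this _ _
    · intro h _
      funext j
      have : ∀ a b : ZMod 2, a + b + b = a := by decide
      exact this _ _
  have hsplit := Finset.card_filter_add_card_filter_not
    (s := (Finset.univ : Finset (Fin n → ZMod 2)))
    (p := fun h => dotp h v = 0)
  rw [← hcard] at hsplit
  have : (Finset.univ : Finset (Fin n → ZMod 2)).card = 2 ^ n := by simp [Finset.card_univ]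
  omega

lemma matrix_count {v : Fin n → ZMod 2} (hv : v ≠ 0) :
    (Finset.univ.filter fun M : Fin m → Fin n → ZMod 2 => ∀ i, dotp (M i) v = 0).card * 2 ^ m
      = 2 ^ (n * m) := by
  classical
  have hpi : (Finset.univ.filter fun M : Fin m → Fin n → ZMod 2 =>
      ∀ i, dotp (M i) v = 0).card
      = ((Finset.univ.filter fun h : Fin n → ZMod 2 => dotp h v = 0).card) ^ m := by
    rw [← Fintype.card_subtype]
    rw [Fintype.card_congr (Equiv.subtypePiEquivPi (p := fun (_ : Fin m) h => dotp h v = 0))]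
    rw [Fintype.card_pi]
    simp [Fintype.card_subtype]
  rw [hpi, ← Nat.mul_pow, row_count hv, ← Nat.pow_mul]

end counts

lemma mem_img_val {n : ℕ} {v : Fin n → ZMod 2} (j : Fin n) :
    (j : ℕ) ∈ img v ↔ v j = 1 := by
  rw [mem_img]
  constructor
  · rintro ⟨j', h1, h2⟩
    rwa [Fin.val_injective h2] at h1
  · intro h; exact ⟨j, h, rfl⟩

/-- `(𝓐, 𝓑)` is a left-cancellative pair over the ground set `X`. -/
def IsLeftCancellativePair (X : Finset ℕ) (𝓐 𝓑 : Finset (Finset ℕ)) : Prop :=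
  (∀ A ∈ 𝓐, A ⊆ X) ∧ (∀ B ∈ 𝓑, B ⊆ X) ∧
  (∀ A ∈ 𝓐, ∀ A' ∈ 𝓐, ∀ B ∈ 𝓑, A \ B = A' \ B → A = A')

lemma main_n (n : ℕ) : ∃ 𝓐 𝓑 : Finset (Finset ℕ),
    IsLeftCancellativePair (Finset.range n) 𝓐 𝓑 ∧
    3 ^ n ≤ 4 * (n + 1) * (𝓐.card * 𝓑.card) := by
  classical
  -- pick the best column weight
  obtain ⟨j, hjmem, hjmax⟩ := Finset.exists_max_image (Finset.range (n + 1))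
    (fun j => 2 ^ j * Nat.choose n j) ⟨0, by simp⟩
  have hjn : j ≤ n := by have := Finset.mem_range.mp hjmem; omega
  set k := n - j with hk
  have hkn : k ≤ n := Nat.sub_le _ _
  have hjk : n - k = j := by omega
  set m := k + 1 with hm
  -- the sum bound : 3 ^ n ≤ (n+1) * (2^j * choose n j)
  have hsum : 3 ^ n ≤ (n + 1) * (2 ^ j * Nat.choose n j) := by
    have hexp : (3 : ℕ) ^ n = ∑ i ∈ Finset.range (n + 1), 2 ^ i * Nat.choose n i := by
      have := add_pow (2 : ℕ) 1 n
      simpa using this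
    rw [hexp]
    calc ∑ i ∈ Finset.range (n + 1), 2 ^ i * Nat.choose n i
        ≤ (Finset.range (n + 1)).card • (2 ^ j * Nat.choose n j) :=
          Finset.sum_le_card_nsmul _ _ _ (fun x hx => hjmax x hx)
      _ = (n + 1) * (2 ^ j * Nat.choose n j) := by simp [smul_eq_mul]
  set 𝓚 := Finset.powersetCard k (Finset.range n) with h𝓚
  have h𝓚card : 𝓚.card = Nat.choose n j := by
    rw [h𝓚, Finset.card_powersetCard, Finset.card_range, hk, Nat.choose_symm hjn]
  -- bad predicate
  set badP : (Fin m → Fin n → ZMod 2) → Finset ℕ → Prop :=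
    fun M B => ∃ v ∈ kerM M, v ≠ 0 ∧ img v ⊆ B with hbadP
  -- per B count
  have hB : ∀ B ∈ 𝓚,
      (Finset.univ.filter fun M : Fin m → Fin n → ZMod 2 => badP M B).card * 2 ^ m
        ≤ 2 ^ k * 2 ^ (n * m) := by
    intro B hB
    have hBcard : B.card = k := (Finset.mem_powersetCard.mp hB).2
    set VB := (Finset.univ.filter fun v : Fin n → ZMod 2 => v ≠ 0 ∧ img v ⊆ B) with hVB
    have hsub : (Finset.univ.filter fun M : Fin m → Fin n → ZMod 2 => badP M B)
        ⊆ VB.biUnion fun v =>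
          Finset.univ.filter fun M : Fin m → Fin n → ZMod 2 => ∀ i, dotp (M i) v = 0 := by
      intro M hM
      simp only [Finset.mem_filter, Finset.mem_univ, true_and, hbadP] at hM
      obtain ⟨v, hvker, hvne, hvB⟩ := hM
      rw [Finset.mem_biUnion]
      refine ⟨v, ?_, ?_⟩
      · simp [hVB, hvne, hvB]
      · simp only [Finset.mem_filter, Finset.mem_univ, true_and]
        simpa [kerM, Finset.mem_filter] using hvker
    have hVBcard : VB.card ≤ 2 ^ k := by
      calc VB.card ≤ B.powerset.card := by
            apply Finset.card_le_card_of_injOn img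
            · intro v hv
              simp only [Finset.mem_coe, hVB, Finset.mem_filter, Finset.mem_univ, true_and] at hv
              exact Finset.mem_powerset.mpr hv.2
            · intro a _ b _ hab
              exact img_injective hab
        _ = 2 ^ k := by rw [Finset.card_powerset, hBcard]
    calc (Finset.univ.filter fun M : Fin m → Fin n → ZMod 2 => badP M B).card * 2 ^ m
        ≤ (VB.biUnion fun v => Finset.univ.filter
            fun M : Fin m → Fin n → ZMod 2 => ∀ i, dotp (M i) v = 0).card * 2 ^ m :=
          Nat.mul_le_mul_right _ (Finset.card_le_card hsub)
      _ ≤ (∑ v ∈ VB, (Finset.univ.filter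
            fun M : Fin m → Fin n → ZMod 2 => ∀ i, dotp (M i) v = 0).card) * 2 ^ m :=
          Nat.mul_le_mul_right _ (Finset.card_biUnion_le)
      _ = ∑ v ∈ VB, (Finset.univ.filter
            fun M : Fin m → Fin n → ZMod 2 => ∀ i, dotp (M i) v = 0).card * 2 ^ m := by
          rw [Finset.sum_mul]
      _ = ∑ v ∈ VB, 2 ^ (n * m) := by
          apply Finset.sum_congr rfl
          intro v hv
          have hvne : v ≠ 0 := by
            simp only [hVB, Finset.mem_filter, Finset.mem_univ, true_and] at hv
            exact hv.1
          exact matrix_count hvne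
      _ = VB.card * 2 ^ (n * m) := by rw [Finset.sum_const, smul_eq_mul]
      _ ≤ 2 ^ k * 2 ^ (n * m) := Nat.mul_le_mul_right _ hVBcard
  -- pigeonhole: find a good matrix
  obtain ⟨M, _, hMmin⟩ := Finset.exists_min_image
    (Finset.univ : Finset (Fin m → Fin n → ZMod 2))
    (fun M => (𝓚.filter fun B => badP M B).card) ⟨0, Finset.mem_univ _⟩
  have hbadcard : 2 * (𝓚.filter fun B => badP M B).card ≤ 𝓚.card := by
    have hswap : ∑ M' ∈ (Finset.univ : Finset (Fin m → Fin n → ZMod 2)),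
        (𝓚.filter fun B => badP M' B).card
        = ∑ B ∈ 𝓚, (Finset.univ.filter fun M' : Fin m → Fin n → ZMod 2 => badP M' B).card := by
      simp only [Finset.card_filter]
      rw [Finset.sum_comm]
    have hStot : (∑ M' ∈ (Finset.univ : Finset (Fin m → Fin n → ZMod 2)),
        (𝓚.filter fun B => badP M' B).card) * 2 ^ m ≤ 𝓚.card * (2 ^ k * 2 ^ (n * m)) := by
      rw [hswap, Finset.sum_mul]
      calc ∑ B ∈ 𝓚, (Finset.univ.filter
            fun M' : Fin m → Fin n → ZMod 2 => badP M' B).card * 2 ^ m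
          ≤ ∑ _B ∈ 𝓚, 2 ^ k * 2 ^ (n * m) := Finset.sum_le_sum hB
        _ = 𝓚.card * (2 ^ k * 2 ^ (n * m)) := by rw [Finset.sum_const, smul_eq_mul]
    have hmin : 2 ^ (n * m) * (𝓚.filter fun B => badP M B).card
        ≤ ∑ M' ∈ (Finset.univ : Finset (Fin m → Fin n → ZMod 2)),
          (𝓚.filter fun B => badP M' B).card := by
      have := Finset.card_nsmul_le_sum (Finset.univ : Finset (Fin m → Fin n → ZMod 2))
        (fun M' => (𝓚.filter fun B => badP M' B).card)
        ((𝓚.filter fun B => badP M B).card) (fun x hx => hMmin x hx)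
      have hcardu : (Finset.univ : Finset (Fin m → Fin n → ZMod 2)).card = 2 ^ (n * m) := by
        simp [Finset.card_univ, Fintype.card_fun, ← Nat.pow_mul]
      rwa [hcardu, smul_eq_mul] at this
    -- combine: 2^(nm) * bad * 2^m ≤ 𝓚.card * 2^k * 2^(nm), with 2^m = 2^k * 2
    have hcomb : 2 ^ (n * m) * (𝓚.filter fun B => badP M B).card * 2 ^ m
        ≤ 𝓚.card * (2 ^ k * 2 ^ (n * m)) :=
      le_trans (Nat.mul_le_mul_right _ hmin) hStot
    have h2m : (2 : ℕ) ^ m = 2 ^ k * 2 := by rw [hm, pow_succ]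
    rw [h2m] at hcomb
    have hpos : 0 < 2 ^ (n * m) * 2 ^ k := by positivity
    apply Nat.le_of_mul_le_mul_left _ hpos
    calc 2 ^ (n * m) * 2 ^ k * (2 * (𝓚.filter fun B => badP M B).card)
        = 2 ^ (n * m) * (𝓚.filter fun B => badP M B).card * (2 ^ k * 2) := by ring
      _ ≤ 𝓚.card * (2 ^ k * 2 ^ (n * m)) := hcomb
      _ = 2 ^ (n * m) * 2 ^ k * 𝓚.card := by ring
  -- define the families
  set 𝓐 := (kerM M).image img with h𝓐
  set 𝓑 := 𝓚.filter (fun B => ¬ badP M B) with h𝓑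
  have h𝓐card : 𝓐.card = (kerM M).card :=
    Finset.card_image_of_injective _ img_injective
  have h𝓑card : 𝓚.card ≤ 2 * 𝓑.card := by
    have h1 := Finset.card_filter_add_card_filter_not (s := 𝓚) (p := fun B => badP M B)
    rw [h𝓑]
    omega
  refine ⟨𝓐, 𝓑, ⟨?_, ?_, ?_⟩, ?_⟩
  · -- 𝓐 ⊆ X
    intro A hA
    obtain ⟨v, _, hv⟩ := Finset.mem_image.mp hA
    rw [← hv]
    exact img_subset_range v
  · -- 𝓑 ⊆ X
    intro B hBm
    rw [h𝓑, Finset.mem_filter] at hBm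
    exact (Finset.mem_powersetCard.mp hBm.1).1
  · -- cancellation
    intro A hA A' hA' B hBm hd
    obtain ⟨v, hvker, hv⟩ := Finset.mem_image.mp hA
    obtain ⟨v', hv'ker, hv'⟩ := Finset.mem_image.mp hA'
    rw [h𝓑, Finset.mem_filter] at hBm
    have hgood := hBm.2
    have hwker : v + v' ∈ kerM M := kerM_add hvker hv'ker
    have hwsub : img (v + v') ⊆ B := by
      intro x hx
      rw [mem_img] at hx
      obtain ⟨i, hi1, hi2⟩ := hx
      by_contra hxB
      have hvx : ((i : ℕ) ∈ A) ↔ v i = 1 := by rw [← hv]; exact mem_img_val i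
      have hv'x : ((i : ℕ) ∈ A') ↔ v' i = 1 := by rw [← hv']; exact mem_img_val i
      have hiB : (i : ℕ) ∉ B := by rwa [hi2]
      have hiff : ((i : ℕ) ∈ A) ↔ ((i : ℕ) ∈ A') := by
        constructor
        · intro h
          have : (i : ℕ) ∈ A \ B := Finset.mem_sdiff.mpr ⟨h, hiB⟩
          rw [hd] at this
          exact (Finset.mem_sdiff.mp this).1
        · intro h
          have : (i : ℕ) ∈ A' \ B := Finset.mem_sdiff.mpr ⟨h, hiB⟩
          rw [← hd] at this
          exact (Finset.mem_sdiff.mp this).1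
      have hadd : v i + v' i = 1 := hi1
      have : ∀ a b : ZMod 2, a + b = 1 → ((a = 1) ↔ ¬ (b = 1)) := by decide
      rw [hvx, hv'x] at hiff
      rw [this _ _ hadd] at hiff
      tauto
    have hw0 : v + v' = 0 := by
      by_contra hw
      exact hgood ⟨v + v', hwker, hw, hwsub⟩
    have hvv' : v = v' := by
      funext i
      have : v i + v' i = 0 := congrFun hw0 i
      have h2 : ∀ a b : ZMod 2, a + b = 0 → a = b := by decide
      exact h2 _ _ this
    rw [← hv, ← hv', hvv']
  · -- the counting
    have hA2 : 2 ^ j ≤ 2 * 𝓐.card := by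
      have hker := kerM_card M
      have h2m : (2 : ℕ) ^ m = 2 ^ k * 2 := by rw [hm, pow_succ]
      have hsplit2 : (2 : ℕ) ^ n = 2 ^ j * 2 ^ k := by
        rw [← pow_add]; congr 1; omega
      rw [h2m, hsplit2, h𝓐card.symm] at hker
      have : 2 ^ j * 2 ^ k ≤ 2 * 𝓐.card * 2 ^ k := by
        calc 2 ^ j * 2 ^ k ≤ 𝓐.card * (2 ^ k * 2) := hker
          _ = 2 * 𝓐.card * 2 ^ k := by ring
      exact Nat.le_of_mul_le_mul_right this (by positivity)
    calc 3 ^ n ≤ (n + 1) * (2 ^ j * Nat.choose n j) := hsum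
      _ ≤ (n + 1) * ((2 * 𝓐.card) * (2 * 𝓑.card)) := by
          apply Nat.mul_le_mul_left
          apply Nat.mul_le_mul hA2
          rw [← h𝓚card]
          exact h𝓑card
      _ = 4 * (n + 1) * (𝓐.card * 𝓑.card) := by ring

theorem stmt_4 (ε : ℝ) (hε : 0 < ε) :
    ∃ N : ℕ, ∀ n ≥ N, ∃ (X : Finset ℕ) (𝓐 𝓑 : Finset (Finset ℕ)),
      X.card = n ∧ IsLeftCancellativePair X 𝓐 𝓑 ∧
      (𝓐.card * 𝓑.card : ℝ) ≥ (3 : ℝ) ^ ((1 - ε) * n) := by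
  set c : ℝ := (3 : ℝ) ^ ε with hcdef
  have hc : (1 : ℝ) < c :=
    Real.one_lt_rpow_iff_of_pos (by norm_num) |>.mpr (Or.inl ⟨by norm_num, hε⟩)
  have hlim := tendsto_pow_const_div_const_pow_of_one_lt 1 hc
  have hev : ∀ᶠ n : ℕ in Filter.atTop, ((n : ℝ) ^ 1 / c ^ n) < 1 / 8 :=
    hlim.eventually_lt_const (by norm_num)
  obtain ⟨N, hN⟩ := Filter.eventually_atTop.mp hev
  refine ⟨max N 1, fun n hn => ?_⟩
  have hnN : N ≤ n := le_trans (le_max_left _ _) hn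
  have hn1 : 1 ≤ n := le_trans (le_max_right _ _) hn
  obtain ⟨𝓐, 𝓑, hpair, hcount⟩ := main_n n
  refine ⟨Finset.range n, 𝓐, 𝓑, by simp, hpair, ?_⟩
  have hcpos : (0 : ℝ) < c ^ n := pow_pos (lt_trans one_pos hc) n
  have h8 : ((n : ℝ) ^ 1 / c ^ n) < 1 / 8 := hN n hnN
  have h8n : 8 * (n : ℝ) < c ^ n := by
    rw [div_lt_div_iff₀ hcpos (by norm_num)] at h8
    nlinarith
  have h4 : (4 : ℝ) * (n + 1) ≤ c ^ n := by
    have : (1 : ℝ) ≤ (n : ℝ) := by exact_mod_cast hn1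
    nlinarith
  have hmain : (3 : ℝ) ^ n ≤ 4 * (n + 1) * ((𝓐.card : ℝ) * 𝓑.card) := by
    exact_mod_cast hcount
  have hpow : (3 : ℝ) ^ ((1 - ε) * n) * c ^ n = (3 : ℝ) ^ n := by
    rw [hcdef, ← Real.rpow_natCast ((3 : ℝ) ^ ε) n, ← Real.rpow_natCast (3 : ℝ) n,
      ← Real.rpow_mul (by norm_num : (0:ℝ) ≤ 3),
      ← Real.rpow_add (by norm_num : (0:ℝ) < 3)]
    congr 1
    ring
  have hrpos : (0 : ℝ) ≤ (3 : ℝ) ^ ((1 - ε) * n) := Real.rpow_nonneg (by norm_num) _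
  have hchain : (3 : ℝ) ^ ((1 - ε) * n) * (4 * (n + 1))
      ≤ ((𝓐.card : ℝ) * 𝓑.card) * (4 * (n + 1)) := by
    calc (3 : ℝ) ^ ((1 - ε) * n) * (4 * (n + 1))
        ≤ (3 : ℝ) ^ ((1 - ε) * n) * c ^ n := by
          apply mul_le_mul_of_nonneg_left h4 hrpos
      _ = (3 : ℝ) ^ n := hpow
      _ ≤ 4 * (n + 1) * ((𝓐.card : ℝ) * 𝓑.card) := hmain
      _ = ((𝓐.card : ℝ) * 𝓑.card) * (4 * (n + 1)) := by ring
  have hfpos : (0 : ℝ) < 4 * ((n : ℝ) + 1) := by positivity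
  exact le_of_mul_le_mul_right hchain hfpos
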